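/- arXiv:1208.0120 — 7 statements merged into one kernel-verified Lean document; each statement's English description precedes it below -/
import Mathlib

section
/- Let A and M be C*-algebras with M unital, let ρ : A → M be a *-homomorphism, let a ∈ A, and let v ∈ M be an isometry (v*v = 1). Then ‖vρ(a) − av‖² ≤ ‖ρ(a)‖·‖ρ(a) − v*av‖ + ‖ρ(a*) − v*a*v‖·‖ρ(a)‖ + ‖v*(a*a)v − ρ(a*a)‖. -/
/-- Let `M` be a unital C*-algebra, `A` a C*-subalgebra of `M`,
`ρ : A → M` a *-homomorphism, `a ∈ A`, and `v ∈ M` an isometry (`v* v = 1`). Then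
`‖vρ(a) − av‖² ≤ ‖ρ(a)‖·‖ρ(a) − v*av‖ + ‖ρ(a*) − v*a*v‖·‖ρ(a)‖ + ‖v*(a*a)v − ρ(a*a)‖`. -/
theorem stmt1 {M : Type*} [CStarAlgebra M]
    (A : NonUnitalStarSubalgebra ℂ M) (hA : IsClosed (A : Set M))
    (ρ : A →⋆ₙₐ[ℂ] M) (a : A) (v : M) (hv : star v * v = 1) :
    ‖v * ρ a - (a : M) * v‖ ^ 2 ≤
      ‖ρ a‖ * ‖ρ a - star v * (a : M) * v‖
        + ‖ρ (star a) - star v * star (a : M) * v‖ * ‖ρ a‖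
        + ‖star v * (star (a : M) * (a : M)) * v - ρ (star a * a)‖ := by
  set x := v * ρ a - (a : M) * v with hx
  have key : star x * x =
      star (ρ a) * (ρ a - star v * (a : M) * v)
        + (ρ (star a) - star v * star (a : M) * v) * ρ a
        + (star v * (star (a : M) * (a : M)) * v - ρ (star a * a)) := by
    have h1 : ρ (star a) = star (ρ a) := by simp [map_star]
    have h2 : ρ (star a * a) = star (ρ a) * ρ a := by simp [map_mul, map_star]
    rw [hx]
    simp only [star_sub, star_mul, h1, h2]
    rw [sub_mul, sub_mul, mul_sub, mul_sub]
    have e1 : star (ρ a) * star v * (v * ρ a) = star (ρ a) * ρ a := by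
      rw [mul_assoc, ← mul_assoc (star v), hv, one_mul]
    rw [e1]
    push_cast
    noncomm_ring
  have h2 : ‖x‖ ^ 2 = ‖star x * x‖ := by
    rw [CStarRing.norm_star_mul_self, sq]
  rw [h2, key]
  calc ‖star (ρ a) * (ρ a - star v * (a : M) * v)
        + (ρ (star a) - star v * star (a : M) * v) * ρ a
        + (star v * (star (a : M) * (a : M)) * v - ρ (star a * a))‖
      ≤ ‖star (ρ a) * (ρ a - star v * (a : M) * v)‖
        + ‖(ρ (star a) - star v * star (a : M) * v) * ρ a‖
        + ‖star v * (star (a : M) * (a : M)) * v - ρ (star a * a)‖ := by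
        exact norm_add₃_le
    _ ≤ _ := by
        gcongr
        · calc ‖star (ρ a) * (ρ a - star v * (a : M) * v)‖
            ≤ ‖star (ρ a)‖ * ‖ρ a - star v * (a : M) * v‖ := norm_mul_le _ _
          _ = ‖ρ a‖ * ‖ρ a - star v * (a : M) * v‖ := by rw [norm_star]
        · exact norm_mul_le _ _
end

section
/- Let M be a unital C*-algebra, let A be a C*-subalgebra of M containing the unit of M, and let ρ : A → M be a unital *-homomorphism. Suppose that for every finite subset F of A and every ε > 0 there exists an isometry v ∈ M (v*v = 1) such that ‖ρ(a) − v*av‖ < ε for all a ∈ F. Then for every finite subset F of A and every ε > 0 there exists an isometry v ∈ M such that ‖vρ(a) − av‖ < ε for all a ∈ F. -/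
/-- Let `M` be a unital C*-algebra, `A` a C*-subalgebra of `M`
containing the unit of `M`, and `ρ : A → M` a unital *-homomorphism.  Suppose that
for every finite subset `F ⊆ A` and every `ε > 0` there exists an isometry `v ∈ M`
with `‖ρ(a) − v*av‖ < ε` for all `a ∈ F`.  Then for every finite subset `F ⊆ A` and
every `ε > 0` there exists an isometry `v ∈ M` with `‖vρ(a) − av‖ < ε` for all `a ∈ F`. -/
theorem stmt2 {M : Type*} [CStarAlgebra M]
    (A : StarSubalgebra ℂ M) (hA : IsClosed (A : Set M))
    (ρ : A →⋆ₐ[ℂ] M)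
    (hyp : ∀ (F : Finset A) (ε : ℝ), 0 < ε →
      ∃ v : M, star v * v = 1 ∧ ∀ a ∈ F, ‖ρ a - star v * (a : M) * v‖ < ε) :
    ∀ (F : Finset A) (ε : ℝ), 0 < ε →
      ∃ v : M, star v * v = 1 ∧ ∀ a ∈ F, ‖v * ρ a - (a : M) * v‖ < ε := by
  classical
  intro F ε hε
  rcases subsingleton_or_nontrivial M with hM | hM
  · refine ⟨1, Subsingleton.elim _ _, fun a _ => ?_⟩
    rw [Subsingleton.elim (1 * ρ a - (a : M) * 1) 0, norm_zero]
    exact hε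
  -- nontrivial case
  set C : ℝ := 1 + ∑ a ∈ F, ‖(a : M)‖ with hC
  have hsum_nonneg : (0:ℝ) ≤ ∑ a ∈ F, ‖(a : M)‖ :=
    Finset.sum_nonneg fun a _ => norm_nonneg _
  have hCpos : (0:ℝ) < C := by positivity
  have hden : (0:ℝ) < 2 * C + 1 := by positivity
  set δ : ℝ := min 1 (ε ^ 2 / (2 * C + 1)) with hδdef
  have hδpos : 0 < δ := lt_min one_pos (by positivity)
  have hδ1 : δ ≤ 1 := min_le_left _ _
  have hδ2 : δ * (2 * C + 1) ≤ ε ^ 2 := by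
    have := min_le_right 1 (ε ^ 2 / (2 * C + 1))
    calc δ * (2 * C + 1) ≤ (ε ^ 2 / (2 * C + 1)) * (2 * C + 1) := by
          exact mul_le_mul_of_nonneg_right this hden.le
      _ = ε ^ 2 := by field_simp
  obtain ⟨v, hv, hvF⟩ := hyp (F ∪ F.image (fun a => star a * a)) δ hδpos
  refine ⟨v, hv, fun a haF => ?_⟩
  have hb1 : ‖ρ a - star v * (a : M) * v‖ < δ :=
    hvF a (Finset.mem_union_left _ haF)
  have hb2 : ‖ρ (star a * a) - star v * ((star (a : M)) * (a : M)) * v‖ < δ := by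
    have := hvF (star a * a) (Finset.mem_union_right _
      (Finset.mem_image.2 ⟨a, haF, rfl⟩))
    simpa using this
  set s : M := ρ a with hs
  set b : M := (a : M) with hb
  have hσ : ρ (star a * a) = star s * s := by
    rw [map_mul, map_star]
  -- norm of v is controlled
  have hnormv : ‖v‖ ^ 2 = 1 := by
    have : ‖star v * v‖ = 1 := by rw [hv, norm_one]
    rwa [CStarRing.norm_star_mul_self, ← sq] at this
  have hnormv1 : ‖v‖ = 1 := by
    nlinarith [norm_nonneg v]
  -- bound on ‖s‖
  have hsb : ‖star v * b * v‖ ≤ ‖b‖ := by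
    calc ‖star v * b * v‖ ≤ ‖star v * b‖ * ‖v‖ := norm_mul_le _ _
      _ ≤ ‖star v‖ * ‖b‖ * ‖v‖ := by
          exact mul_le_mul_of_nonneg_right (norm_mul_le _ _) (norm_nonneg _)
      _ = ‖b‖ := by rw [norm_star, hnormv1]; ring
  have hbC : ‖b‖ ≤ ∑ a ∈ F, ‖(a : M)‖ :=
    Finset.single_le_sum (f := fun a : A => ‖(a : M)‖) (fun a _ => norm_nonneg ((a : M))) haF
  have hsC : ‖s‖ ≤ C := by
    calc ‖s‖ = ‖(s - star v * b * v) + star v * b * v‖ := by rw [sub_add_cancel]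
      _ ≤ ‖s - star v * b * v‖ + ‖star v * b * v‖ := norm_add_le _ _
      _ ≤ δ + ‖b‖ := add_le_add hb1.le hsb
      _ ≤ 1 + ∑ a ∈ F, ‖(a : M)‖ := add_le_add hδ1 hbC
  -- the key algebraic identity
  set x : M := v * s - b * v with hx
  set e1 : M := s - star v * b * v with he1
  set e3 : M := ρ (star a * a) - star v * (star b * b) * v with he3
  have key : star x * x
      = star s * e1 + star e1 * s - e3 + star s * (star v * v - 1) * s := by
    simp only [hx, he1, he3, hσ, star_sub, star_mul, star_star]
    noncomm_ring
  have key2 : star x * x = star s * e1 + star e1 * s - e3 := by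
    rw [key, hv, sub_self, mul_zero, zero_mul, add_zero]
  have hne1 : ‖e1‖ < δ := hb1
  have hne3 : ‖e3‖ < δ := hb2
  have hnorm : ‖star x * x‖ < δ * (2 * C + 1) := by
    calc ‖star x * x‖ ≤ ‖star s * e1‖ + ‖star e1 * s‖ + ‖e3‖ := by
          rw [key2]
          exact (norm_sub_le _ _).trans (add_le_add_left (norm_add_le _ _) _)
      _ ≤ ‖s‖ * ‖e1‖ + ‖e1‖ * ‖s‖ + ‖e3‖ := by
          have ha1 : ‖star s * e1‖ ≤ ‖s‖ * ‖e1‖ :=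
            (norm_mul_le _ _).trans (by rw [norm_star])
          have ha2 : ‖star e1 * s‖ ≤ ‖e1‖ * ‖s‖ :=
            (norm_mul_le _ _).trans (by rw [norm_star])
          exact add_le_add (add_le_add ha1 ha2) le_rfl
      _ < C * δ + δ * C + δ := by
          have h1 : ‖s‖ * ‖e1‖ ≤ C * δ :=
            mul_le_mul hsC hne1.le (norm_nonneg _) hCpos.le
          have h2 : ‖e1‖ * ‖s‖ ≤ δ * C :=
            mul_le_mul hne1.le hsC (norm_nonneg _) hδpos.le
          linarith
      _ = δ * (2 * C + 1) := by ring
  have hxsq : ‖x‖ ^ 2 < ε ^ 2 := by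
    have : ‖star x * x‖ = ‖x‖ ^ 2 := by
      rw [CStarRing.norm_star_mul_self, sq]
    linarith [hnorm, hδ2]
  exact lt_of_pow_lt_pow_left₀ 2 hε.le hxsq
end

section
/- Let M be a unital C*-algebra and let q, v, T ∈ M satisfy: q = q* and q² = q; v*v = 1; T*T = 1 − q; T T* = 1; and T q = 0. Then the element w := (1 − v v* + v T* v*) T + v q is a unitary of M, i.e., w*w = w w* = 1. -/
/-- Let `M` be a unital C*-algebra and `q, v, T ∈ M` with `q = q*`,
`q² = q`, `v*v = 1`, `T*T = 1 − q`, `T T* = 1`, and `T q = 0`.  Then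
`w := (1 − v v* + v T* v*) T + v q` is a unitary of `M`, i.e. `w*w = w w* = 1`. -/
theorem stmt7 {M : Type*} [CStarAlgebra M]
    (q v T : M) (hq_sa : star q = q) (hq_idem : q * q = q)
    (hv : star v * v = 1)
    (hT1 : star T * T = 1 - q) (hT2 : T * star T = 1) (hTq : T * q = 0) :
    star ((1 - v * star v + v * star T * star v) * T + v * q)
        * ((1 - v * star v + v * star T * star v) * T + v * q) = 1 ∧
      ((1 - v * star v + v * star T * star v) * T + v * q)
        * star ((1 - v * star v + v * star T * star v) * T + v * q) = 1 := by
  have hqT : q * star T = 0 := by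
    have := congrArg star hTq
    simpa [star_mul, hq_sa] using this
  have hv' : ∀ x : M, star v * (v * x) = x := fun x => by
    rw [← mul_assoc, hv, one_mul]
  have hT2' : ∀ x : M, T * (star T * x) = x := fun x => by
    rw [← mul_assoc, hT2, one_mul]
  have hT1' : ∀ x : M, star T * (T * x) = x - q * x := fun x => by
    rw [← mul_assoc, hT1, sub_mul, one_mul]
  have hTq' : ∀ x : M, T * (q * x) = 0 := fun x => by
    rw [← mul_assoc, hTq, zero_mul]
  have hqT' : ∀ x : M, q * (star T * x) = 0 := fun x => by
    rw [← mul_assoc, hqT, zero_mul]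
  have hq' : ∀ x : M, q * (q * x) = q * x := fun x => by
    rw [← mul_assoc, hq_idem]
  constructor <;>
  · simp only [star_add, star_mul, star_sub, star_one, star_star, hq_sa]
    noncomm_ring
    simp only [hv', hT2', hT1', hTq', hqT', hq', hv, hT2, hT1, hTq, hqT, hq_idem,
      mul_zero, zero_mul, mul_one, one_mul, mul_sub, sub_mul, smul_zero, neg_zero,
      add_zero, zero_add, mul_neg, neg_mul]
    noncomm_ring
end

section
/- Let M be a unital C*-algebra and let q, v, T ∈ M satisfy q = q*, q² = q, v*v = 1, T*T = 1 − q, T T* = 1, and T q = 0, and set w := (1 − v v* + v T* v*) T + v q. Let a, b ∈ M be elements with T* b = b T* and q b = b q. Then ‖a w − w (T* a T + q b q)‖ ≤ 3‖a v − v b‖ + 2‖a* v − v b*‖. -/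
/-- Let `M` be a unital C*-algebra, let `q, v, T ∈ M` satisfy
`q = q*`, `q² = q`, `v*v = 1`, `T*T = 1 − q`, `T T* = 1`, `T q = 0`, and set
`w := (1 − v v* + v T* v*) T + v q`.  Let `a, b ∈ M` with `T* b = b T*` and
`q b = b q`.  Then `‖a w − w (T* a T + q b q)‖ ≤ 3‖a v − v b‖ + 2‖a* v − v b*‖`. -/
theorem stmt9 {M : Type*} [CStarAlgebra M]
    (q v T : M) (hq_sa : star q = q) (hq_idem : q * q = q)
    (hv : star v * v = 1)
    (hT1 : star T * T = 1 - q) (hT2 : T * star T = 1) (hTq : T * q = 0)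
    (a b : M) (hTb : star T * b = b * star T) (hqb : q * b = b * q) :
    ‖a * ((1 - v * star v + v * star T * star v) * T + v * q)
        - ((1 - v * star v + v * star T * star v) * T + v * q)
            * (star T * a * T + q * b * q)‖ ≤
      3 * ‖a * v - v * b‖ + 2 * ‖star a * v - v * star b‖ := by
  have hqT : q * star T = 0 := by
    have := congrArg star hTq
    simpa [star_mul, hq_sa] using this
  set P : M := 1 - v * star v + v * star T * star v with hP
  set X : M := star T * a * T + q * b * q with hX
  set D1 : M := a * v - v * b with hD1
  set D2 : M := star v * a - b * star v with hD2
  -- key multiplicative facts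
  have hX1 : T * X = a * T := by
    rw [hX]
    simp only [mul_add, ← mul_assoc, hT2, hTq, one_mul, zero_mul, add_zero]
  have hX2 : q * X = b * q := by
    rw [hX]
    have hbq : b * q * q = b * q := by rw [mul_assoc, hq_idem]
    simp only [mul_add, ← mul_assoc, hqT, hq_idem, zero_mul, zero_add, hqb, hbq]
  have hw : (P * T + v * q) * X = P * (a * T) + v * (b * q) := by
    rw [add_mul, mul_assoc, hX1, mul_assoc, hX2]
  -- the algebraic identity
  have key : a * (P * T + v * q) - (P * T + v * q) * X
      = ((v * D2 - D1 * star v) + (D1 * (star T * star v) - v * (star T * D2))) * T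
          + D1 * q
        - v * ((star T * b - b * star T) * (star v * T)) := by
    rw [hw, hP, hD1, hD2]
    noncomm_ring
  rw [key, hTb, sub_self, zero_mul, mul_zero, sub_zero]
  -- norm facts
  have hone : ‖(1 : M)‖ ≤ 1 := by
    have h := CStarRing.norm_star_mul_self (x := (1 : M))
    rw [star_one, one_mul] at h
    nlinarith [norm_nonneg (1 : M)]
  have hv1 : ‖v‖ ≤ 1 := by
    have h := CStarRing.norm_star_mul_self (x := v)
    rw [hv] at h
    nlinarith [norm_nonneg v]
  have hq1 : ‖q‖ ≤ 1 := by
    have h := CStarRing.norm_star_mul_self (x := q)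
    rw [hq_sa, hq_idem] at h
    nlinarith [norm_nonneg q]
  have hp1 : ‖(1 : M) - q‖ ≤ 1 := by
    have hsa : star ((1 : M) - q) = 1 - q := by simp [hq_sa]
    have hidem : ((1 : M) - q) * (1 - q) = 1 - q := by
      rw [sub_mul, mul_sub, mul_sub, one_mul, mul_one, hq_idem]
      noncomm_ring
    have h := CStarRing.norm_star_mul_self (x := (1 : M) - q)
    rw [hsa, hidem] at h
    nlinarith [norm_nonneg ((1 : M) - q)]
  have hT1' : ‖T‖ ≤ 1 := by
    have h := CStarRing.norm_star_mul_self (x := T)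
    rw [hT1] at h
    nlinarith [norm_nonneg T, hp1, norm_nonneg ((1 : M) - q)]
  have hsT : ‖star T‖ ≤ 1 := by rwa [norm_star]
  have hsv : ‖star v‖ ≤ 1 := by rwa [norm_star]
  have hD2n : ‖D2‖ = ‖star a * v - v * star b‖ := by
    rw [← norm_star (star a * v - v * star b)]
    congr 1
    rw [hD2]
    simp [star_mul]
  rw [← hD2n]
  -- now the estimate
  have e1 : ‖v * D2‖ ≤ ‖D2‖ := by
    calc ‖v * D2‖ ≤ ‖v‖ * ‖D2‖ := norm_mul_le _ _
    _ ≤ 1 * ‖D2‖ := by gcongr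
    _ = ‖D2‖ := one_mul _
  have e2 : ‖D1 * star v‖ ≤ ‖D1‖ := by
    calc ‖D1 * star v‖ ≤ ‖D1‖ * ‖star v‖ := norm_mul_le _ _
    _ ≤ ‖D1‖ * 1 := by gcongr
    _ = ‖D1‖ := mul_one _
  have e3 : ‖D1 * (star T * star v)‖ ≤ ‖D1‖ := by
    calc ‖D1 * (star T * star v)‖ ≤ ‖D1‖ * (‖star T‖ * ‖star v‖) :=
      le_trans (norm_mul_le _ _) (by gcongr; exact norm_mul_le _ _)
    _ ≤ ‖D1‖ * (1 * 1) := by gcongr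
    _ = ‖D1‖ := by ring
  have e4 : ‖v * (star T * D2)‖ ≤ ‖D2‖ := by
    calc ‖v * (star T * D2)‖ ≤ ‖v‖ * (‖star T‖ * ‖D2‖) :=
      le_trans (norm_mul_le _ _) (by gcongr; exact norm_mul_le _ _)
    _ ≤ 1 * (1 * ‖D2‖) := by gcongr
    _ = ‖D2‖ := by ring
  have eq5 : ‖D1 * q‖ ≤ ‖D1‖ := by
    calc ‖D1 * q‖ ≤ ‖D1‖ * ‖q‖ := norm_mul_le _ _
    _ ≤ ‖D1‖ * 1 := by gcongr
    _ = ‖D1‖ := by ring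
  have big : ‖((v * D2 - D1 * star v) + (D1 * (star T * star v) - v * (star T * D2))) * T‖
      ≤ 2 * ‖D1‖ + 2 * ‖D2‖ := by
    calc ‖((v * D2 - D1 * star v) + (D1 * (star T * star v) - v * (star T * D2))) * T‖
        ≤ ‖(v * D2 - D1 * star v) + (D1 * (star T * star v) - v * (star T * D2))‖ * ‖T‖ :=
          norm_mul_le _ _
      _ ≤ ((‖v * D2‖ + ‖D1 * star v‖) + (‖D1 * (star T * star v)‖ + ‖v * (star T * D2)‖)) * 1 := by
          gcongr
          exact le_trans (norm_add_le _ _) (by gcongr <;> exact norm_sub_le _ _)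
      _ ≤ ((‖D2‖ + ‖D1‖) + (‖D1‖ + ‖D2‖)) * 1 := by gcongr
      _ = 2 * ‖D1‖ + 2 * ‖D2‖ := by ring
  calc ‖((v * D2 - D1 * star v) + (D1 * (star T * star v) - v * (star T * D2))) * T + D1 * q‖
      ≤ ‖((v * D2 - D1 * star v) + (D1 * (star T * star v) - v * (star T * D2))) * T‖
        + ‖D1 * q‖ := norm_add_le _ _
    _ ≤ (2 * ‖D1‖ + 2 * ‖D2‖) + ‖D1‖ := by gcongr
    _ = 3 * ‖D1‖ + 2 * ‖D2‖ := by ring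
end

section
/- Let H be a complex Hilbert space, let q ∈ B(H) be an orthogonal projection, and let (j_n)_{n≥1} be a sequence in B(H) with j_1 = j_1* = q, j_n* j_n = q for all n, j_m* j_n = 0 for m ≠ n, and such that for every ξ ∈ H the family (j_n j_n* ξ) is summable with sum ξ; let T ∈ B(H) be the operator determined by Tξ = Σ_n j_n (j_{n+1}* ξ). Let x ∈ B(H) satisfy x = q x q. Then there exists y ∈ B(H) such that for every ξ ∈ H the family (j_n (x (j_n* ξ)))_{n≥1} is summable with sum yξ, and moreover ‖y‖ ≤ ‖x‖, q y = y q = x, and T* y = y T*. -/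
private lemma orth_norm_sum {H : Type*} [NormedAddCommGroup H] [InnerProductSpace ℂ H]
    (f : ℕ → H) (h : ∀ m n, m ≠ n → (inner ℂ (f m) (f n) : ℂ) = 0) (s : Finset ℕ) :
    ‖∑ i ∈ s, f i‖ ^ 2 = ∑ i ∈ s, ‖f i‖ ^ 2 := by
  have h1 : (inner ℂ (∑ i ∈ s, f i) (∑ i ∈ s, f i) : ℂ) = ∑ i ∈ s, (inner ℂ (f i) (f i) : ℂ) := by
    rw [sum_inner]
    refine Finset.sum_congr rfl fun i hi => ?_
    rw [inner_sum, Finset.sum_eq_single i]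
    · intro k _ hki; exact h i k (Ne.symm hki)
    · intro hi'; exact absurd hi hi'
  have h2 : ((‖∑ i ∈ s, f i‖ ^ 2 : ℝ) : ℂ) = ((∑ i ∈ s, ‖f i‖ ^ 2 : ℝ) : ℂ) := by
    push_cast
    simp only [inner_self_eq_norm_sq_to_K] at h1
    exact h1
  exact_mod_cast h2

private lemma orth_hasSum_norm_sq {H : Type*} [NormedAddCommGroup H] [InnerProductSpace ℂ H]
    {f : ℕ → H} {a : H}
    (h : ∀ m n, m ≠ n → (inner ℂ (f m) (f n) : ℂ) = 0) (hf : HasSum f a) :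
    HasSum (fun n => ‖f n‖ ^ 2) (‖a‖ ^ 2) := by
  have h0 : Filter.Tendsto (fun s : Finset ℕ => ∑ i ∈ s, f i) Filter.atTop (nhds a) := hf
  have h2 : Filter.Tendsto (fun s : Finset ℕ => ‖∑ i ∈ s, f i‖ ^ 2) Filter.atTop
      (nhds (‖a‖ ^ 2)) := h0.norm.pow 2
  have h3 : (fun s : Finset ℕ => ‖∑ i ∈ s, f i‖ ^ 2)
      = fun s : Finset ℕ => ∑ i ∈ s, ‖f i‖ ^ 2 := funext fun s => orth_norm_sum f h s
  rw [h3] at h2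
  exact h2

private lemma orth_summable {H : Type*} [NormedAddCommGroup H] [InnerProductSpace ℂ H]
    [CompleteSpace H] {f : ℕ → H}
    (h : ∀ m n, m ≠ n → (inner ℂ (f m) (f n) : ℂ) = 0)
    (hsq : Summable fun n => ‖f n‖ ^ 2) : Summable f := by
  rw [summable_iff_vanishing_norm]
  intro ε hε
  obtain ⟨s, hs⟩ := summable_iff_vanishing_norm.mp hsq (ε ^ 2) (by positivity)
  refine ⟨s, fun t ht => ?_⟩
  have h1 := hs t ht
  rw [Real.norm_eq_abs] at h1
  have h2 : ‖∑ i ∈ t, f i‖ ^ 2 < ε ^ 2 := by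
    rw [orth_norm_sum f h t]
    exact (le_abs_self _).trans_lt h1
  exact lt_of_pow_lt_pow_left₀ 2 hε.le h2

/-- Let `H` be a complex Hilbert space, `q ∈ B(H)` an orthogonal
projection, and `(jₙ)_{n≥1}` a sequence in `B(H)` (indexed here by `ℕ`, with `j n`
playing the role of `j_{n+1}`) with `j₁ = j₁* = q`, `jₙ* jₙ = q` for all `n`,
`jₘ* jₙ = 0` for `m ≠ n`, and `Σₙ jₙ jₙ* ξ = ξ` for all `ξ ∈ H`; let `T ∈ B(H)` be
determined by `Tξ = Σₙ jₙ (j_{n+1}* ξ)`.  Let `x ∈ B(H)` satisfy `x = q x q`.  Then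
there exists `y ∈ B(H)` (the infinite ampliation `λ^∞(x) = Σₙ jₙ x jₙ*`) such that
`yξ = Σₙ jₙ (x (jₙ* ξ))` for all `ξ`, `‖y‖ ≤ ‖x‖`, `q y = y q = x`, and
`T* y = y T*`. -/
theorem stmt10 {H : Type*} [NormedAddCommGroup H] [InnerProductSpace ℂ H]
    [CompleteSpace H]
    (q : H →L[ℂ] H) (hq_sa : star q = q) (hq_idem : q * q = q)
    (j : ℕ → (H →L[ℂ] H))
    (hj1 : j 0 = q)
    (hjq : ∀ n, star (j n) * j n = q)
    (hjorth : ∀ m n, m ≠ n → star (j m) * j n = 0)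
    (hjsum : ∀ ξ : H, HasSum (fun n => j n (star (j n) ξ)) ξ)
    (T : H →L[ℂ] H)
    (hT : ∀ ξ : H, HasSum (fun n => j n (star (j (n + 1)) ξ)) (T ξ))
    (x : H →L[ℂ] H) (hx : x = q * x * q) :
    ∃ y : H →L[ℂ] H,
      (∀ ξ : H, HasSum (fun n => j n (x (star (j n) ξ))) (y ξ)) ∧
      ‖y‖ ≤ ‖x‖ ∧ q * y = x ∧ y * q = x ∧ star T * y = y * star T := by
  classical
  -- basic algebra
  have hqx : q * x = x := by
    conv_lhs => rw [hx]
    simp only [← mul_assoc]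
    rw [hq_idem, ← hx]
  have hxq : x * q = x := by
    conv_lhs => rw [hx]
    rw [mul_assoc, hq_idem, ← hx]
  have hqxv : ∀ w : H, q (x w) = x w := fun w => by
    have : (q * x) w = x w := by rw [hqx]
    simpa using this
  have hxqv : ∀ w : H, x (q w) = x w := fun w => by
    have : (x * q) w = x w := by rw [hxq]
    simpa using this
  have hq0 : ∀ n, q * j n = if n = 0 then q else 0 := by
    intro n
    by_cases h : n = 0
    · subst h; simp [hj1, hq_idem]
    · have h0 : star (j 0) * j n = 0 := hjorth 0 n (fun e => h e.symm)
      rw [hj1, hq_sa] at h0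
      simp [h, h0]
  have hq0' : ∀ n, star (j n) * q = if n = 0 then q else 0 := by
    intro n
    have h0 := congrArg star (hq0 n)
    rw [star_mul, hq_sa] at h0
    by_cases h : n = 0
    · subst h; simpa [hq_sa] using h0
    · simpa [h] using h0
  -- inner ℂ products of the j's
  have hinner : ∀ (u v : H) (m n : ℕ), m ≠ n → (inner ℂ (j m u) (j n v) : ℂ) = 0 := by
    intro u v m n hmn
    rw [← ContinuousLinearMap.adjoint_inner_left (j n), ← ContinuousLinearMap.star_eq_adjoint]
    have h0 : star (j n) (j m u) = (star (j n) * j m) u := rfl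
    rw [h0, hjorth n m (Ne.symm hmn)]
    simp
  have hinner_self : ∀ (u v : H) (n : ℕ), (inner ℂ (j n u) (j n v) : ℂ) = inner ℂ (q u) v := by
    intro u v n
    rw [← ContinuousLinearMap.adjoint_inner_left (j n), ← ContinuousLinearMap.star_eq_adjoint]
    have h0 : star (j n) (j n u) = (star (j n) * j n) u := rfl
    rw [h0, hjq n]
  have hnorm : ∀ (n : ℕ) (v : H), q v = v → ‖j n v‖ = ‖v‖ := by
    intro n v hv
    have h1 : (inner ℂ (j n v) (j n v) : ℂ) = inner ℂ v v := by rw [hinner_self, hv]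
    have h3 : ‖j n v‖ ^ 2 = ‖v‖ ^ 2 := by
      have h2 := congrArg (RCLike.re (K := ℂ)) h1
      rwa [inner_self_eq_norm_sq, inner_self_eq_norm_sq] at h2
    have h4 := congrArg Real.sqrt h3
    rwa [Real.sqrt_sq (norm_nonneg _), Real.sqrt_sq (norm_nonneg _)] at h4
  -- ∑ ‖jₙ* ξ‖² = ‖ξ‖²
  have hsq : ∀ ξ : H, HasSum (fun n => ‖star (j n) ξ‖ ^ 2) (‖ξ‖ ^ 2) := by
    intro ξ
    have h1 := (innerSL ℂ ξ).hasSum (hjsum ξ)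
    have h2 : (fun n => (innerSL ℂ ξ) (j n (star (j n) ξ)))
        = fun n => ((‖star (j n) ξ‖ ^ 2 : ℝ) : ℂ) := by
      funext n
      have : (innerSL ℂ ξ) (j n (star (j n) ξ)) = inner ℂ ξ (j n (star (j n) ξ)) := rfl
      rw [this, ← ContinuousLinearMap.adjoint_inner_left (j n),
        ← ContinuousLinearMap.star_eq_adjoint, inner_self_eq_norm_sq_to_K]
      norm_cast
    have h3 : (innerSL ℂ ξ) ξ = ((‖ξ‖ ^ 2 : ℝ) : ℂ) := by
      have : (innerSL ℂ ξ) ξ = inner ℂ ξ ξ := rfl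
      rw [this, inner_self_eq_norm_sq_to_K]
      norm_cast
    rw [h2, h3] at h1
    exact Complex.hasSum_ofReal.mp h1
  -- the family and its properties
  set F : H → ℕ → H := fun ξ n => j n (x (star (j n) ξ)) with hF
  have hFo : ∀ ξ : H, ∀ m n, m ≠ n → (inner ℂ (F ξ m) (F ξ n) : ℂ) = 0 := by
    intro ξ m n hmn
    exact hinner _ _ m n hmn
  have hFnorm : ∀ (ξ : H) (n : ℕ), ‖F ξ n‖ = ‖x (star (j n) ξ)‖ := by
    intro ξ n
    exact hnorm n _ (hqxv _)
  have hFle : ∀ (ξ : H) (n : ℕ), ‖F ξ n‖ ^ 2 ≤ ‖x‖ ^ 2 * ‖star (j n) ξ‖ ^ 2 := by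
    intro ξ n
    rw [hFnorm, ← mul_pow]
    exact pow_le_pow_left₀ (norm_nonneg _) ((x).le_opNorm _) 2
  have hFsummable : ∀ ξ : H, Summable (F ξ) := by
    intro ξ
    refine orth_summable (hFo ξ) ?_
    exact Summable.of_nonneg_of_le (fun n => sq_nonneg _) (hFle ξ)
      (((hsq ξ).summable).mul_left (‖x‖ ^ 2))
  -- the linear map
  have hFadd : ∀ (a b : H) (n : ℕ), F (a + b) n = F a n + F b n := by
    intro a b n; simp [hF]
  have hFsmul : ∀ (c : ℂ) (a : H) (n : ℕ), F (c • a) n = c • F a n := by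
    intro c a n; simp [hF]
  set Y : H →ₗ[ℂ] H :=
    { toFun := fun ξ => ∑' n, F ξ n
      map_add' := by
        intro a b
        have h1 := ((hFsummable a).hasSum.add (hFsummable b).hasSum)
        have h2 : (fun n => F a n + F b n) = F (a + b) := by
          funext n; rw [hFadd]
        rw [h2] at h1
        exact h1.tsum_eq
      map_smul' := by
        intro c a
        have h1 := (hFsummable a).hasSum.const_smul c
        have h2 : (fun n => c • F a n) = F (c • a) := by
          funext n; rw [hFsmul]
        rw [h2] at h1
        simpa using h1.tsum_eq } with hY
  have hYsum : ∀ ξ : H, HasSum (F ξ) (Y ξ) := fun ξ => (hFsummable ξ).hasSum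
  have hYbound : ∀ ξ : H, ‖Y ξ‖ ≤ ‖x‖ * ‖ξ‖ := by
    intro ξ
    have hn := orth_hasSum_norm_sq (hFo ξ) (hYsum ξ)
    have h1 : ‖Y ξ‖ ^ 2 ≤ ‖x‖ ^ 2 * ‖ξ‖ ^ 2 := by
      have := hasSum_le (hFle ξ) hn ((hsq ξ).mul_left (‖x‖ ^ 2))
      simpa using this
    nlinarith [norm_nonneg (Y ξ), mul_nonneg (norm_nonneg x) (norm_nonneg ξ)]
  set y : H →L[ℂ] H := Y.mkContinuous ‖x‖ hYbound with hy
  have hysum : ∀ ξ : H, HasSum (F ξ) (y ξ) := fun ξ => hYsum ξ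
  refine ⟨y, hysum, LinearMap.mkContinuous_norm_le Y (norm_nonneg x) hYbound, ?_, ?_, ?_⟩
  -- q * y = x
  · ext ξ
    have h1 := q.hasSum (hysum ξ)
    have h0 : (fun n => q (F ξ n)) = fun n => if n = 0 then x ξ else 0 := by
      funext n
      have he : q (F ξ n) = (q * j n) (x (star (j n) ξ)) := rfl
      rw [he, hq0 n]
      by_cases h : n = 0
      · subst h
        rw [if_pos rfl, if_pos rfl]
        have h2 : star (j 0) = q := by rw [hj1, hq_sa]
        rw [h2]
        have h3 : q (x (q ξ)) = (q * x * q) ξ := rfl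
        rw [h3, ← hx]
      · simp [h]
    rw [h0] at h1
    have h2 : HasSum (fun n => if n = 0 then x ξ else 0) (x ξ) := hasSum_ite_eq 0 (x ξ)
    have := h1.unique h2
    simpa using this
  -- y * q = x
  · ext ξ
    have h1 := hysum (q ξ)
    have h0 : F (q ξ) = fun n => if n = 0 then x ξ else 0 := by
      funext n
      have he : F (q ξ) n = j n (x ((star (j n) * q) ξ)) := rfl
      rw [he, hq0' n]
      by_cases h : n = 0
      · subst h
        rw [if_pos rfl, if_pos rfl, hj1]
        have h3 : q (x (q ξ)) = (q * x * q) ξ := rfl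
        rw [h3, ← hx]
      · simp [h]
    rw [h0] at h1
    have h2 : HasSum (fun n => if n = 0 then x ξ else 0) (x ξ) := hasSum_ite_eq 0 (x ξ)
    have := h1.unique h2
    simpa using this
  -- star T * y = y * star T
  · -- T ∘ j (n+1) = j n ∘ q , T ∘ j 0 = 0
    have hTj : ∀ n, T * j (n + 1) = j n * q := by
      intro n
      ext a
      have h1 := hT (j (n + 1) a)
      have h0 : (fun m => j m (star (j (m + 1)) (j (n + 1) a)))
          = fun m => if m = n then j n (q a) else 0 := by
        funext m
        have he : j m (star (j (m + 1)) (j (n + 1) a))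
            = j m ((star (j (m + 1)) * j (n + 1)) a) := rfl
        rw [he]
        by_cases h : m = n
        · subst h; rw [hjq (m + 1)]; simp
        · rw [hjorth (m + 1) (n + 1) (by omega)]; simp [h]
      rw [h0] at h1
      have h2 : HasSum (fun m => if m = n then j n (q a) else 0) (j n (q a)) :=
        hasSum_ite_eq n _
      have h3 := h1.unique h2
      simpa using h3
    have hTj0 : T * j 0 = 0 := by
      ext a
      have h1 := hT (j 0 a)
      have h0 : (fun m => j m (star (j (m + 1)) (j 0 a))) = fun _ => (0 : H) := by
        funext m
        have he : j m (star (j (m + 1)) (j 0 a)) = j m ((star (j (m + 1)) * j 0) a) := rfl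
        rw [he, hjorth (m + 1) 0 (by omega)]
        simp
      rw [h0] at h1
      have h3 := h1.unique hasSum_zero
      simpa using h3
    have hstar1 : ∀ n, star (j (n + 1)) * star T = q * star (j n) := by
      intro n
      have h0 := congrArg star (hTj n)
      rwa [star_mul, star_mul, hq_sa] at h0
    have hstar0 : star (j 0) * star T = 0 := by
      have h0 := congrArg star hTj0
      rwa [star_mul, star_zero] at h0
    -- star T ∘ j n = j (n+1) ∘ q
    have hTstarj : ∀ (n : ℕ) (a : H), star T (j n a) = j (n + 1) (q a) := by
      intro n a
      apply ext_inner_right ℂ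
      intro b
      rw [ContinuousLinearMap.star_eq_adjoint, ContinuousLinearMap.adjoint_inner_left]
      have h1 := (innerSL ℂ (j n a)).hasSum (hT b)
      have h0 : (fun m => (innerSL ℂ (j n a)) (j m (star (j (m + 1)) b)))
          = fun m => if m = n then (inner ℂ (j (n + 1) (q a)) b : ℂ) else 0 := by
        funext m
        have he : (innerSL ℂ (j n a)) (j m (star (j (m + 1)) b))
            = (inner ℂ (j n a) (j m (star (j (m + 1)) b)) : ℂ) := rfl
        rw [he]
        by_cases h : m = n
        · subst h
          rw [hinner_self]
          have h2 : star (j (m + 1)) b = (ContinuousLinearMap.adjoint (j (m + 1))) b := by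
            rw [← ContinuousLinearMap.star_eq_adjoint]
          rw [h2, ContinuousLinearMap.adjoint_inner_right]
          simp
        · rw [hinner _ _ n m (fun e => h e.symm)]
          simp [h]
      rw [h0] at h1
      have h2 : HasSum (fun m => if m = n then (inner ℂ (j (n + 1) (q a)) b : ℂ) else 0)
          (inner ℂ (j (n + 1) (q a)) b : ℂ) := hasSum_ite_eq n _
      exact h1.unique h2
    ext ξ
    have hL := (star T).hasSum (hysum ξ)
    have hL0 : (fun n => star T (F ξ n)) = fun n => j (n + 1) (x (star (j n) ξ)) := by
      funext n
      have he : star T (F ξ n) = star T (j n (x (star (j n) ξ))) := rfl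
      rw [he, hTstarj, hqxv]
    rw [hL0] at hL
    -- right side
    have hR := hysum (star T ξ)
    set g : ℕ → H := F (star T ξ) with hg
    have hg0 : g 0 = 0 := by
      have he : g 0 = j 0 (x ((star (j 0) * star T) ξ)) := rfl
      rw [he, hstar0]
      simp
    have hgS : ∀ n, g (n + 1) = j (n + 1) (x (star (j n) ξ)) := by
      intro n
      have he : g (n + 1) = j (n + 1) (x ((star (j (n + 1)) * star T) ξ)) := rfl
      rw [he, hstar1]
      have he2 : (q * star (j n)) ξ = q (star (j n) ξ) := rfl
      rw [he2, hxqv]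
    have hR1 : HasSum (fun n => g (n + 1)) (y (star T ξ)) := by
      refine (hasSum_nat_add_iff 1).mpr ?_
      simpa [hg0] using hR
    have hR2 : HasSum (fun n => j (n + 1) (x (star (j n) ξ))) (y (star T ξ)) := by
      have h0 : (fun n => g (n + 1)) = fun n => j (n + 1) (x (star (j n) ξ)) :=
        funext hgS
      rwa [h0] at hR1
    have hfinal := hL.unique hR2
    simpa using hfinal
end

section
/- Let H be a complex Hilbert space, let A be a C*-subalgebra of B(H) containing the identity operator, and let ρ : A → B(H) be a unital *-homomorphism. Let S ∈ B(H) with S*S = 1 and set q := S S*. Let (j_n)_{n≥1} be a sequence in B(H) with j_1 = j_1* = q, j_n* j_n = q for all n, j_m* j_n = 0 for m ≠ n, and such that for every ξ ∈ H the family (j_n j_n* ξ) is summable with sum ξ; let T ∈ B(H) be the operator determined by Tξ = Σ_n j_n (j_{n+1}* ξ), and for a ∈ A let λ^∞(a) ∈ B(H) be the operator determined by λ^∞(a)ξ = Σ_n j_n S ρ(a) S* j_n* ξ. Assume that for every finite subset F of A and every ε > 0 there exists an isometry v ∈ B(H) with ‖v λ^∞(a) − a v‖ < ε for all a ∈ F.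 Then for every finite subset F of A and every ε > 0 there exists a unitary w ∈ B(H) such that ‖w (T* a T + S ρ(a) S*) w* − a‖ < ε for all a ∈ F. -/
section Aux

variable {H : Type*} [NormedAddCommGroup H] [InnerProductSpace ℂ H] [CompleteSpace H]

/-- In a C*-algebra, `x*x = 0` implies `x = 0`. -/
private lemma aux_star_mul_self_zero (x : H →L[ℂ] H) (hx : star x * x = 0) : x = 0 := by
  have h := CStarRing.norm_star_mul_self (x := x)
  rw [hx, norm_zero] at h
  have : ‖x‖ = 0 := by nlinarith [norm_nonneg x]
  exact norm_eq_zero.mp this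

private lemma aux_norm_le_one (x : H →L[ℂ] H) (hx : star x * x = 1) : ‖x‖ ≤ 1 := by
  have h := CStarRing.norm_star_mul_self (x := x)
  rw [hx] at h
  have h1 : ‖(1 : H →L[ℂ] H)‖ ≤ 1 := ContinuousLinearMap.norm_id_le
  nlinarith [norm_nonneg x]

private lemma aux_norm_left (x z : H →L[ℂ] H) (hx : ‖x‖ ≤ 1) : ‖x * z‖ ≤ ‖z‖ :=
  le_trans (norm_mul_le _ _) (by nlinarith [norm_nonneg z, norm_nonneg x])

private lemma aux_norm_right (x z : H →L[ℂ] H) (hx : ‖x‖ ≤ 1) : ‖z * x‖ ≤ ‖z‖ :=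
  le_trans (norm_mul_le _ _) (by nlinarith [norm_nonneg z, norm_nonneg x])

private lemma aux_inner_star (B : H →L[ℂ] H) (x y : H) :
    (inner ℂ x ((star B) y) : ℂ) = inner ℂ (B x) y := by
  rw [ContinuousLinearMap.star_eq_adjoint, ContinuousLinearMap.adjoint_inner_right]

private lemma aux_eq_star (B C : H →L[ℂ] H)
    (h : ∀ x y, (inner ℂ (B x) y : ℂ) = inner ℂ x (C y)) : B = star C := by
  rw [ContinuousLinearMap.star_eq_adjoint]
  exact (ContinuousLinearMap.eq_adjoint_iff B C).mpr h

private lemma aux_shift (f : ℕ → H) (a : H) (h : HasSum f a) :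
    HasSum (fun n => f (n + 1)) (a - f 0) := by
  have := (hasSum_nat_add_iff (f := f) (g := a - f 0) 1)
  simp only [Finset.range_one, Finset.sum_singleton] at this
  exact this.mpr (by simpa using h)

end Aux

set_option maxHeartbeats 1000000 in
/-- (Lemma 2.4 of the paper, with `B(H)` in place of the properly
infinite von Neumann algebra, and the existence of approximating isometries for the
ampliation `λ^∞` taken as a hypothesis.)

Let `H` be a complex Hilbert space, `A ⊆ B(H)` a C*-subalgebra containing the
identity, and `ρ : A → B(H)` a unital *-homomorphism.  Let `S ∈ B(H)` with
`S*S = 1`, `q := S S*`.  Let `(jₙ)` be as in the shift construction (indexed here by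
`ℕ`, with `j n` playing the role of `j_{n+1}`), let `T` be determined by
`Tξ = Σₙ jₙ (j_{n+1}* ξ)`, and let `λ^∞(a)` be determined by
`λ^∞(a)ξ = Σₙ jₙ (S ρ(a) S* (jₙ* ξ))`.  Assume that for every finite `F ⊆ A` and
`ε > 0` there is an isometry `v` with `‖v λ^∞(a) − a v‖ < ε` for all `a ∈ F`.
Then for every finite `F ⊆ A` and `ε > 0` there is a unitary `w ∈ B(H)` with
`‖w (T* a T + S ρ(a) S*) w* − a‖ < ε` for all `a ∈ F`. -/
theorem stmt11 {H : Type*} [NormedAddCommGroup H] [InnerProductSpace ℂ H]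
    [CompleteSpace H]
    (A : StarSubalgebra ℂ (H →L[ℂ] H)) (hA : IsClosed (A : Set (H →L[ℂ] H)))
    (ρ : A →⋆ₐ[ℂ] (H →L[ℂ] H))
    (S : H →L[ℂ] H) (hS : star S * S = 1)
    (j : ℕ → (H →L[ℂ] H))
    (hj1 : j 0 = S * star S)
    (hjq : ∀ n, star (j n) * j n = S * star S)
    (hjorth : ∀ m n, m ≠ n → star (j m) * j n = 0)
    (hjsum : ∀ ξ : H, HasSum (fun n => j n (star (j n) ξ)) ξ)
    (T : H →L[ℂ] H)
    (hT : ∀ ξ : H, HasSum (fun n => j n (star (j (n + 1)) ξ)) (T ξ))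
    (lam : A → (H →L[ℂ] H))
    (hlam : ∀ (a : A) (ξ : H),
      HasSum (fun n => j n ((S * ρ a * star S) (star (j n) ξ))) (lam a ξ))
    (hyp : ∀ (F : Finset A) (ε : ℝ), 0 < ε →
      ∃ v : H →L[ℂ] H, star v * v = 1 ∧
        ∀ a ∈ F, ‖v * lam a - (a : H →L[ℂ] H) * v‖ < ε) :
    ∀ (F : Finset A) (ε : ℝ), 0 < ε →
      ∃ w : H →L[ℂ] H, star w * w = 1 ∧ w * star w = 1 ∧
        ∀ a ∈ F,
          ‖w * (star T * (a : H →L[ℂ] H) * T + S * ρ a * star S) * star w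
              - (a : H →L[ℂ] H)‖ < ε := by
  classical
  intro F ε hε
  set q : H →L[ℂ] H := S * star S with hq
  have hq_star : star q = q := by rw [hq, star_mul, star_star]
  have hqq : q * q = q := by
    have : S * star S * (S * star S) = S * ((star S * S) * star S) := by noncomm_ring
    rw [hq, this, hS, one_mul]
  -- j n * q = j n
  have hjq1 : ∀ n, j n * q = j n := by
    intro n
    have h1q : star (1 - q) = 1 - q := by rw [star_sub, star_one, hq_star]
    have h0 : star (j n * (1 - q)) * (j n * (1 - q)) = 0 := by
      rw [star_mul, h1q]
      have e1 : (1 - q) * star (j n) * (j n * (1 - q))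
          = (1 - q) * (star (j n) * j n) * (1 - q) := by noncomm_ring
      have e2 : (1 - q) * q = 0 := by rw [sub_mul, one_mul, hqq, sub_self]
      rw [e1, hjq n, e2, zero_mul]
    have h2 := aux_star_mul_self_zero _ h0
    rw [mul_sub, mul_one, sub_eq_zero] at h2
    exact h2.symm
  have hqj : ∀ n, q * star (j n) = star (j n) := by
    intro n
    have := congrArg star (hjq1 n)
    rwa [star_mul, hq_star] at this
  have hqS : q * S = S := by rw [hq, mul_assoc, hS, mul_one]
  have hj0S : j 0 * S = S := by rw [hj1, hqS]
  have hj0sS : star (j 0) * S = S := by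
    rw [hj1, hq_star, hqS]
  have hjS : ∀ n, star (j (n + 1)) * S = 0 := by
    intro n
    have h1 : star (j (n + 1)) * (j 0 * S) = 0 := by
      rw [← mul_assoc, hjorth (n + 1) 0 (by omega), zero_mul]
    rwa [hj0S] at h1
  -- T * j (n+1) = j n
  have hTj : ∀ n, T * j (n + 1) = j n := by
    intro n
    ext ξ
    have h := hT (j (n + 1) ξ)
    have h2 : HasSum (fun m => j m (star (j (m + 1)) (j (n + 1) ξ))) (j n ξ) := by
      have hs := hasSum_single (f := fun m => j m (star (j (m + 1)) (j (n + 1) ξ))) n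
        (fun m hm => by
          have hz : star (j (m + 1)) * j (n + 1) = 0 := hjorth _ _ (by omega)
          show j m ((star (j (m + 1)) * j (n + 1)) ξ) = 0
          rw [hz]; simp)
      have hfn : j n (star (j (n + 1)) (j (n + 1) ξ)) = j n ξ := by
        show j n ((star (j (n + 1)) * j (n + 1)) ξ) = j n ξ
        rw [hjq]
        show (j n * q) ξ = j n ξ
        rw [hjq1]
      simpa only [hfn] using hs
    exact h.unique h2
  have hTj0 : T * j 0 = 0 := by
    ext ξ
    have h := hT (j 0 ξ)
    have h2 : HasSum (fun m => j m (star (j (m + 1)) (j 0 ξ))) (0 : H) := by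
      have : (fun m => j m (star (j (m + 1)) (j 0 ξ))) = fun _ => (0 : H) := by
        funext m
        show j m ((star (j (m + 1)) * j 0) ξ) = 0
        rw [hjorth (m + 1) 0 (by omega)]; simp
      rw [this]; exact hasSum_zero
    simpa using h.unique h2
  -- star (j n) * T = star (j (n+1))
  have hjT : ∀ n, star (j n) * T = star (j (n + 1)) := by
    intro n
    ext ξ
    have h := (hT ξ).mapL (star (j n))
    have h2 : HasSum (fun m => star (j n) (j m (star (j (m + 1)) ξ)))
        (star (j (n + 1)) ξ) := by
      have hs := hasSum_single (f := fun m => star (j n) (j m (star (j (m + 1)) ξ))) n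
        (fun m hm => by
          show (star (j n) * j m) (star (j (m + 1)) ξ) = 0
          rw [hjorth n m (Ne.symm hm)]; simp)
      have hfn : star (j n) (j n (star (j (n + 1)) ξ)) = star (j (n + 1)) ξ := by
        show (star (j n) * j n) (star (j (n + 1)) ξ) = star (j (n + 1)) ξ
        rw [hjq]
        show (q * star (j (n + 1))) ξ = star (j (n + 1)) ξ
        rw [hqj]
      simpa only [hfn] using hs
    exact h.unique h2
  have hTj' : ∀ n, star T * j n = j (n + 1) := by
    intro n
    have := congrArg star (hjT n)
    rwa [star_mul, star_star, star_star] at this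
  -- T * star T = 1
  have hTT : T * star T = 1 := by
    ext ξ
    have h := hT (star T ξ)
    have hfun : (fun n => j n (star (j (n + 1)) (star T ξ)))
        = fun n => j n (star (j n) ξ) := by
      funext n
      have hx : star (j (n + 1)) * star T = star (j n) := by
        rw [← star_mul, hTj n]
      show j n ((star (j (n + 1)) * star T) ξ) = j n (star (j n) ξ)
      rw [hx]
    rw [hfun] at h
    simpa using h.unique (hjsum ξ)
  -- star T * T = 1 - q
  have hT'T : star T * T = 1 - q := by
    ext ξ
    have h := (hT ξ).mapL (star T)
    have hfun : (fun n => star T (j n (star (j (n + 1)) ξ)))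
        = fun n => j (n + 1) (star (j (n + 1)) ξ) := by
      funext n
      show (star T * j n) (star (j (n + 1)) ξ) = _
      rw [hTj']
    rw [hfun] at h
    have h2 : HasSum (fun n => j (n + 1) (star (j (n + 1)) ξ)) (ξ - q ξ) := by
      have h3 := aux_shift _ _ (hjsum ξ)
      have h0 : j 0 (star (j 0) ξ) = q ξ := by
        show (j 0 * star (j 0)) ξ = q ξ
        rw [hj1, hq_star, hqq]
      rwa [h0] at h3
    have := h.unique h2
    simpa using this
  -- T * S = 0
  have hTS : T * S = 0 := by
    ext ξ
    have h := hT (S ξ)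
    have h2 : HasSum (fun n => j n (star (j (n + 1)) (S ξ))) (0 : H) := by
      have : (fun n => j n (star (j (n + 1)) (S ξ))) = fun _ => (0 : H) := by
        funext n
        show j n ((star (j (n + 1)) * S) ξ) = 0
        rw [hjS]; simp
      rw [this]; exact hasSum_zero
    simpa using h.unique h2
  -- lam a * S = S * ρ a
  have hlamS : ∀ a : A, lam a * S = S * ρ a := by
    intro a
    ext ξ
    have h := hlam a (S ξ)
    have h2 : HasSum (fun n => j n ((S * ρ a * star S) (star (j n) (S ξ))))
        ((S * ρ a) ξ) := by
      have hs := hasSum_single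
        (f := fun n => j n ((S * ρ a * star S) (star (j n) (S ξ)))) 0
        (fun m hm => by
          obtain ⟨n, rfl⟩ := Nat.exists_eq_succ_of_ne_zero hm
          show j (n + 1) ((S * ρ a * star S) ((star (j (n + 1)) * S) ξ)) = 0
          rw [hjS]; simp)
      have hfn : j 0 ((S * ρ a * star S) (star (j 0) (S ξ))) = (S * ρ a) ξ := by
        show (j 0 * (S * ρ a * star S) * (star (j 0) * S)) ξ = (S * ρ a) ξ
        rw [hj0sS]
        have : j 0 * (S * ρ a * star S) * S = S * ρ a := by
          have e : j 0 * (S * ρ a * star S) * S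
              = (j 0 * S) * ρ a * (star S * S) := by noncomm_ring
          rw [e, hj0S, hS, mul_one]
        rw [this]
      simpa only [hfn] using hs
    exact h.unique h2
  -- star (lam a) = lam (star a)
  have hstar_lam : ∀ a : A, star (lam a) = lam (star a) := by
    intro a
    have key : lam (star a) = star (lam a) := by
      apply aux_eq_star
      intro ξ η
      have h1 : HasSum (fun n => (inner ℂ ξ (j n ((S * ρ a * star S) (star (j n) η))) : ℂ))
          (inner ℂ ξ (lam a η)) := (hlam a η).mapL (innerSL ℂ ξ)
      have h2 : HasSum
          (fun n => (inner ℂ η (j n ((S * ρ (star a) * star S) (star (j n) ξ))) : ℂ))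
          (inner ℂ η (lam (star a) ξ)) := (hlam (star a) ξ).mapL (innerSL ℂ η)
      have h3 := h2.star
      have hre : (fun n => star (inner ℂ η (j n ((S * ρ (star a) * star S) (star (j n) ξ))) : ℂ))
          = fun n => (inner ℂ ξ (j n ((S * ρ a * star S) (star (j n) η))) : ℂ) := by
        funext n
        have hXY : star (j n * (S * ρ (star a) * star S) * star (j n))
            = j n * (S * ρ a * star S) * star (j n) := by
          simp only [star_mul, star_star, map_star, mul_assoc]
        have e1 : (inner ℂ η (j n ((S * ρ (star a) * star S) (star (j n) ξ))) : ℂ)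
            = inner ℂ η ((j n * (S * ρ (star a) * star S) * star (j n)) ξ) := rfl
        have e2 : (inner ℂ ξ (j n ((S * ρ a * star S) (star (j n) η))) : ℂ)
            = inner ℂ ξ ((j n * (S * ρ a * star S) * star (j n)) η) := rfl
        rw [e1, e2, RCLike.star_def, inner_conj_symm, ← hXY, aux_inner_star]
      rw [hre] at h3
      have h4 := h3.unique h1
      calc (inner ℂ (lam (star a) ξ) η : ℂ)
          = star (inner ℂ η (lam (star a) ξ) : ℂ) := by rw [RCLike.star_def, inner_conj_symm]
        _ = inner ℂ ξ (lam a η) := h4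
    exact key.symm
  -- T * lam a = lam a * T
  have hTlam : ∀ a : A, T * lam a = lam a * T := by
    intro a
    ext ξ
    have hR : HasSum (fun n => j n ((S * ρ a * star S) (star (j (n + 1)) ξ)))
        (lam a (T ξ)) := by
      have h := hlam a (T ξ)
      have hfun : (fun n => j n ((S * ρ a * star S) (star (j n) (T ξ))))
          = fun n => j n ((S * ρ a * star S) (star (j (n + 1)) ξ)) := by
        funext n
        have : star (j n) (T ξ) = star (j (n + 1)) ξ := by
          show (star (j n) * T) ξ = _
          rw [hjT]
        rw [this]
      rwa [hfun] at h
    have hL : HasSum (fun n => j n ((S * ρ a * star S) (star (j (n + 1)) ξ)))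
        (T (lam a ξ)) := by
      have h := (hlam a ξ).mapL T
      have hfun : (fun n => T (j n ((S * ρ a * star S) (star (j n) ξ))))
          = fun n => (if n = 0 then 0 else j (n - 1) ((S * ρ a * star S) (star (j n) ξ))) := by
        funext n
        cases n with
        | zero =>
          show (T * j 0) ((S * ρ a * star S) (star (j 0) ξ)) = _
          rw [hTj0]; simp
        | succ m =>
          show (T * j (m + 1)) ((S * ρ a * star S) (star (j (m + 1)) ξ)) = _
          rw [hTj m]; simp
      rw [hfun] at h
      have h2 := aux_shift _ _ h
      simp only [Nat.succ_ne_zero, if_false, Nat.add_sub_cancel, eq_self_iff_true, if_true, sub_zero] at h2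
      exact h2
    exact (hL.unique hR)
    -- star T commutes with lam a
  have hT'lam : ∀ a : A, star T * lam a = lam a * star T := by
    intro a
    have h := congrArg star (hTlam (star a))
    rw [star_mul, star_mul, hstar_lam, star_star] at h
    exact h.symm
  -- norm facts
  have hnS : ‖S‖ ≤ 1 := aux_norm_le_one S hS
  have hnS' : ‖star S‖ ≤ 1 := by rw [norm_star]; exact hnS
  have hnT' : ‖star T‖ ≤ 1 := aux_norm_le_one (star T) (by rw [star_star, hTT])
  have hnT : ‖T‖ ≤ 1 := by rw [← norm_star]; exact hnT'
  -- get the approximating isometry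
  have hε6 : 0 < ε / 6 := by linarith
  obtain ⟨v, hv, hvF⟩ := hyp (F ∪ F.image star) (ε / 6) hε6
  have hnv : ‖v‖ ≤ 1 := aux_norm_le_one v hv
  have hnv' : ‖star v‖ ≤ 1 := by rw [norm_star]; exact hnv
  set p : H →L[ℂ] H := v * star v with hp
  have mvv : ∀ x : H →L[ℂ] H, star v * (v * x) = x := fun x => by
    rw [← mul_assoc, hv, one_mul]
  have mTT : ∀ x : H →L[ℂ] H, T * (star T * x) = x := fun x => by
    rw [← mul_assoc, hTT, one_mul]
  have mT'T : ∀ x : H →L[ℂ] H, star T * (T * x) = x - S * (star S * x) := fun x => by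
    rw [← mul_assoc, hT'T, sub_mul, one_mul, hq, mul_assoc]
  have mTS : ∀ x : H →L[ℂ] H, T * (S * x) = 0 := fun x => by
    rw [← mul_assoc, hTS, zero_mul]
  have hST : star S * star T = 0 := by
    have := congrArg star hTS; rwa [star_mul, star_zero] at this
  have mST : ∀ x : H →L[ℂ] H, star S * (star T * x) = 0 := fun x => by
    rw [← mul_assoc, hST, zero_mul]
  have mSS : ∀ x : H →L[ℂ] H, star S * (S * x) = x := fun x => by
    rw [← mul_assoc, hS, one_mul]
  set α : H →L[ℂ] H := v * (star T * star v) + (1 - p) with hα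
  set β : H →L[ℂ] H := v * S with hβ
  set w : H →L[ℂ] H := α * T + β * star S with hw
  have hw1 : star w * w = 1 := by
    simp only [hw, hα, hβ, hp, star_add, star_sub, star_mul, star_one, star_star,
      mul_add, add_mul, mul_sub, sub_mul, mul_assoc, mul_one, one_mul,
      mvv, mTT, mT'T, mTS, mST, mSS, hv, hTT, hT'T, hTS, hST, hS,
      mul_zero, zero_mul, add_zero, zero_add, sub_zero, hq]
    abel
  have hw2 : w * star w = 1 := by
    simp only [hw, hα, hβ, hp, star_add, star_sub, star_mul, star_one, star_star,
      mul_add, add_mul, mul_sub, sub_mul, mul_assoc, mul_one, one_mul,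
      mvv, mTT, mT'T, mTS, mST, mSS, hv, hTT, hT'T, hTS, hST, hS,
      mul_zero, zero_mul, add_zero, zero_add, sub_zero, hq]
    abel
  refine ⟨w, hw1, hw2, ?_⟩
  intro a haF
  have hnw' : ‖star w‖ ≤ 1 := by rw [norm_star]; exact aux_norm_le_one w hw1
  -- the two approximate intertwining estimates
  have hva : ‖v * lam a - (a : H →L[ℂ] H) * v‖ < ε / 6 :=
    hvF a (Finset.mem_union_left _ haF)
  have hcoe : ((star a : A) : H →L[ℂ] H) = star (a : H →L[ℂ] H) := rfl
  have hva2 : ‖v * lam (star a) - star (a : H →L[ℂ] H) * v‖ < ε / 6 := by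
    have := hvF (star a)
      (Finset.mem_union_right _ (Finset.mem_image_of_mem _ haF))
    rwa [hcoe] at this
  have hva' : ‖lam a * star v - star v * (a : H →L[ℂ] H)‖ < ε / 6 := by
    have hst : star (v * lam (star a) - star (a : H →L[ℂ] H) * v)
        = lam a * star v - star v * (a : H →L[ℂ] H) := by
      rw [star_sub, star_mul, star_mul, hstar_lam, star_star, star_star]
    calc ‖lam a * star v - star v * (a : H →L[ℂ] H)‖
        = ‖star (v * lam (star a) - star (a : H →L[ℂ] H) * v)‖ := by rw [hst]
      _ = ‖v * lam (star a) - star (a : H →L[ℂ] H) * v‖ := norm_star _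
      _ < ε / 6 := hva2
  -- algebraic decomposition of the commutator with α
  have hmid : v * (star T * (lam a * star v)) = v * (lam a * (star T * star v)) := by
    rw [← mul_assoc (star T), hT'lam a, mul_assoc]
  have hcomm : α * (a : H →L[ℂ] H) - (a : H →L[ℂ] H) * α
      = v * (star T * (star v * (a : H →L[ℂ] H) - lam a * star v))
        + (v * lam a - (a : H →L[ℂ] H) * v) * (star T * star v)
        + ((a : H →L[ℂ] H) * v - v * lam a) * star v
        + v * (lam a * star v - star v * (a : H →L[ℂ] H)) := by
    simp only [hα, hp, mul_add, add_mul, mul_sub, sub_mul, mul_assoc, mul_one, one_mul]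
    rw [hmid]
    abel
  have hbeta : β * ρ a - (a : H →L[ℂ] H) * β
      = (v * lam a - (a : H →L[ℂ] H) * v) * S := by
    have h1 : v * lam a * S = v * S * ρ a := by
      rw [mul_assoc, hlamS a, ← mul_assoc]
    rw [hβ, sub_mul, h1]
    noncomm_ring
  -- norm bound for the α-commutator
  have hnTv : ‖star T * star v‖ ≤ 1 := le_trans (aux_norm_left _ _ hnT') hnv'
  have hb1 : ‖α * (a : H →L[ℂ] H) - (a : H →L[ℂ] H) * α‖ < 4 * (ε / 6) := by
    rw [hcomm]
    have e1 : ‖v * (star T * (star v * (a : H →L[ℂ] H) - lam a * star v))‖ < ε / 6 := by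
      calc ‖v * (star T * (star v * (a : H →L[ℂ] H) - lam a * star v))‖
          ≤ ‖star T * (star v * (a : H →L[ℂ] H) - lam a * star v)‖ :=
            aux_norm_left _ _ hnv
        _ ≤ ‖star v * (a : H →L[ℂ] H) - lam a * star v‖ := aux_norm_left _ _ hnT'
        _ = ‖lam a * star v - star v * (a : H →L[ℂ] H)‖ := norm_sub_rev _ _
        _ < ε / 6 := hva'
    have e2 : ‖(v * lam a - (a : H →L[ℂ] H) * v) * (star T * star v)‖ < ε / 6 :=
      lt_of_le_of_lt (aux_norm_right _ _ hnTv) hva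
    have e3 : ‖((a : H →L[ℂ] H) * v - v * lam a) * star v‖ < ε / 6 := by
      calc ‖((a : H →L[ℂ] H) * v - v * lam a) * star v‖
          ≤ ‖(a : H →L[ℂ] H) * v - v * lam a‖ := aux_norm_right _ _ hnv'
        _ = ‖v * lam a - (a : H →L[ℂ] H) * v‖ := norm_sub_rev _ _
        _ < ε / 6 := hva
    have e4 : ‖v * (lam a * star v - star v * (a : H →L[ℂ] H))‖ < ε / 6 :=
      lt_of_le_of_lt (aux_norm_left _ _ hnv) hva'
    calc ‖v * (star T * (star v * (a : H →L[ℂ] H) - lam a * star v))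
          + (v * lam a - (a : H →L[ℂ] H) * v) * (star T * star v)
          + ((a : H →L[ℂ] H) * v - v * lam a) * star v
          + v * (lam a * star v - star v * (a : H →L[ℂ] H))‖
        ≤ ‖v * (star T * (star v * (a : H →L[ℂ] H) - lam a * star v))
            + (v * lam a - (a : H →L[ℂ] H) * v) * (star T * star v)
            + ((a : H →L[ℂ] H) * v - v * lam a) * star v‖
          + ‖v * (lam a * star v - star v * (a : H →L[ℂ] H))‖ := norm_add_le _ _
      _ ≤ ‖v * (star T * (star v * (a : H →L[ℂ] H) - lam a * star v))
            + (v * lam a - (a : H →L[ℂ] H) * v) * (star T * star v)‖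
          + ‖((a : H →L[ℂ] H) * v - v * lam a) * star v‖
          + ‖v * (lam a * star v - star v * (a : H →L[ℂ] H))‖ := by
            gcongr
            exact norm_add_le _ _
      _ ≤ ‖v * (star T * (star v * (a : H →L[ℂ] H) - lam a * star v))‖
          + ‖(v * lam a - (a : H →L[ℂ] H) * v) * (star T * star v)‖
          + ‖((a : H →L[ℂ] H) * v - v * lam a) * star v‖
          + ‖v * (lam a * star v - star v * (a : H →L[ℂ] H))‖ := by
            gcongr
            exact norm_add_le _ _
      _ < 4 * (ε / 6) := by linarith
  have hb2 : ‖β * ρ a - (a : H →L[ℂ] H) * β‖ < ε / 6 := by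
    rw [hbeta]
    exact lt_of_le_of_lt (aux_norm_right _ _ hnS) hva
  -- the main intertwining identity
  have hid : w * (star T * (a : H →L[ℂ] H) * T + S * ρ a * star S)
      - (a : H →L[ℂ] H) * w
      = (α * (a : H →L[ℂ] H) - (a : H →L[ℂ] H) * α) * T
        + (β * ρ a - (a : H →L[ℂ] H) * β) * star S := by
    simp only [hw, mul_add, add_mul, sub_mul, mul_sub, mul_assoc,
      mTT, mTS, mST, mSS, mul_zero, zero_mul, add_zero, zero_add]
    abel
  have hfin : ‖w * (star T * (a : H →L[ℂ] H) * T + S * ρ a * star S)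
      - (a : H →L[ℂ] H) * w‖ < 5 * (ε / 6) := by
    rw [hid]
    calc ‖(α * (a : H →L[ℂ] H) - (a : H →L[ℂ] H) * α) * T
          + (β * ρ a - (a : H →L[ℂ] H) * β) * star S‖
        ≤ ‖(α * (a : H →L[ℂ] H) - (a : H →L[ℂ] H) * α) * T‖
          + ‖(β * ρ a - (a : H →L[ℂ] H) * β) * star S‖ := norm_add_le _ _
      _ ≤ ‖α * (a : H →L[ℂ] H) - (a : H →L[ℂ] H) * α‖
          + ‖β * ρ a - (a : H →L[ℂ] H) * β‖ := by
            gcongr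
            · exact aux_norm_right _ _ hnT
            · exact aux_norm_right _ _ hnS'
      _ < 5 * (ε / 6) := by linarith
  have hfac : w * (star T * (a : H →L[ℂ] H) * T + S * ρ a * star S) * star w
      - (a : H →L[ℂ] H)
      = (w * (star T * (a : H →L[ℂ] H) * T + S * ρ a * star S)
          - (a : H →L[ℂ] H) * w) * star w := by
    have e : (w * (star T * (a : H →L[ℂ] H) * T + S * ρ a * star S)
          - (a : H →L[ℂ] H) * w) * star w
        = w * (star T * (a : H →L[ℂ] H) * T + S * ρ a * star S) * star w
          - (a : H →L[ℂ] H) * (w * star w) := by noncomm_ring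
    rw [e, hw2, mul_one]
  calc ‖w * (star T * (a : H →L[ℂ] H) * T + S * ρ a * star S) * star w
        - (a : H →L[ℂ] H)‖
      = ‖(w * (star T * (a : H →L[ℂ] H) * T + S * ρ a * star S)
          - (a : H →L[ℂ] H) * w) * star w‖ := by rw [hfac]
    _ ≤ ‖w * (star T * (a : H →L[ℂ] H) * T + S * ρ a * star S)
          - (a : H →L[ℂ] H) * w‖ := aux_norm_right _ _ hnw'
    _ < ε := by linarith
end

section
/- Let G be a topological group. Suppose that for every group homomorphism π : F∞ × F∞ → G, every finite subset S of F∞ × F∞, and every neighborhood W of the identity of G, there exist a subgroup H of G which, with the subspace topology, has the Kirchberg property, and a group homomorphism σ : F∞ × F∞ → H such that σ(x) ∈ π(x)·W for all x ∈ S. Then G has the Kirchberg property. -/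
/-- A topological group `G` has the *Kirchberg property* if every group homomorphism
`π : F∞ × F∞ → G` (where `F∞` is the free group on countably many generators) can be
approximated, in the topology of pointwise convergence, by group homomorphisms whose
image has compact closure in `G`: for every finite set `S ⊆ F∞ × F∞` and every
neighborhood `W` of the identity there is a homomorphism `μ` with precompact image
such that `μ x ∈ π x · W` for all `x ∈ S`. -/
def KirchbergProperty (G : Type*) [Group G] [TopologicalSpace G] : Prop :=
  ∀ (π : (FreeGroup ℕ × FreeGroup ℕ) →* G)
    (S : Finset (FreeGroup ℕ × FreeGroup ℕ)) (W : Set G), W ∈ nhds (1 : G) →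
    ∃ μ : (FreeGroup ℕ × FreeGroup ℕ) →* G,
      IsCompact (closure (Set.range μ)) ∧
      ∀ x ∈ S, ∃ w ∈ W, μ x = π x * w

/-- Let `G` be a topological group.  Suppose that for every group
homomorphism `π : F∞ × F∞ → G`, every finite subset `S` of `F∞ × F∞`, and every
neighborhood `W` of the identity of `G`, there exist a subgroup `H ≤ G` which (with
the subspace topology) has the Kirchberg property, and a homomorphism
`σ : F∞ × F∞ → H` with `σ x ∈ π x · W` for all `x ∈ S`.  Then `G` has the Kirchberg
property. -/
theorem stmt13 {G : Type*} [Group G] [TopologicalSpace G] [IsTopologicalGroup G]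
    (hyp : ∀ (π : (FreeGroup ℕ × FreeGroup ℕ) →* G)
      (S : Finset (FreeGroup ℕ × FreeGroup ℕ)) (W : Set G), W ∈ nhds (1 : G) →
      ∃ H : Subgroup G, KirchbergProperty H ∧
        ∃ σ : (FreeGroup ℕ × FreeGroup ℕ) →* H,
          ∀ x ∈ S, ∃ w ∈ W, (σ x : G) = π x * w) :
    KirchbergProperty G := by
  intro π S W hW
  -- split W : find V with V * V ⊆ W
  obtain ⟨V, hV, hVV⟩ := exists_nhds_one_split hW
  obtain ⟨H, hK, σ, hσ⟩ := hyp π S V hV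
  -- V pulled back to H is a neighborhood of 1
  have hV' : (Subtype.val ⁻¹' V : Set H) ∈ nhds (1 : H) := by
    rw [nhds_induced]
    exact Filter.preimage_mem_comap hV
  obtain ⟨μ', hμ'c, hμ'⟩ := hK σ S _ hV'
  refine ⟨H.subtype.comp μ', ?_, ?_⟩
  · -- compactness
    have h1 : IsCompact (Subtype.val '' closure (Set.range μ') : Set G) :=
      hμ'c.image continuous_subtype_val
    have h2 : Set.range (H.subtype.comp μ') ⊆ Subtype.val '' closure (Set.range μ') := by
      rintro _ ⟨x, rfl⟩
      exact ⟨μ' x, subset_closure ⟨x, rfl⟩, rfl⟩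
    exact h1.closure.of_isClosed_subset isClosed_closure (closure_mono h2)
  · intro x hx
    obtain ⟨w, hw, hσw⟩ := hσ x hx
    obtain ⟨w', hw', hμw⟩ := hμ' x hx
    refine ⟨w * (w' : G), hVV w hw w' hw', ?_⟩
    simp only [MonoidHom.comp_apply, Subgroup.coe_subtype]
    have : ((μ' x : H) : G) = (σ x : G) * (w' : G) := by exact_mod_cast congrArg Subtype.val hμw
    rw [this, hσw, mul_assoc]
end
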